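/- Suppose D is odd. Let 𝐄_0, …, 𝐄_D ∈ Mat_{𝔽₂^D}(ℂ) satisfy Σ_{i=0}^D 𝐄_i = I and 𝐀·𝐄_i = (D−2i)·𝐄_i for all i, and let E_0, …, E_{(D−1)/2} ∈ Mat_X(ℂ) satisfy Σ_i E_i = I and A·E_i = θ_i·E_i for all i, where θ_i = ((D−2i)² − D)/2. Then for each 0 ≤ i ≤ (D−1)/2, the matrix E_i equals the submatrix of 𝐄_i + 𝐄_{D−i} obtained by restricting rows and columns to X. -/

import Mathlib

open Matrix

/-- Vertex set of the hypercube `H(D,2)`: binary words of length `D`. -/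
abbrev Vtx (D : ℕ) := Fin D → ZMod 2

/-- Vertex set of the halved cube: binary words of even Hamming weight. -/
abbrev HVtx (D : ℕ) := {x : Vtx D // Even (hammingNorm x)}

/-- Adjacency matrix of the hypercube `H(D,2)`. -/
noncomputable def adjCube (D : ℕ) : Matrix (Vtx D) (Vtx D) ℂ :=
  fun y z => if hammingNorm (y - z) = 1 then 1 else 0

/-- Adjacency matrix of the halved cube `½H(D,2)`. -/
noncomputable def adjHalf (D : ℕ) : Matrix (HVtx D) (HVtx D) ℂ :=
  fun y z => if hammingNorm (y.val - z.val) = 2 then 1 else 0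

namespace Stmt11Aux

variable {D : ℕ}

/-- distance-2 matrix on the full cube -/
noncomputable def adjTwo (D : ℕ) : Matrix (Vtx D) (Vtx D) ℂ :=
  fun y z => if hammingNorm (y - z) = 2 then 1 else 0

lemma hn_filter (x : Vtx D) :
    hammingNorm x = (Finset.univ.filter (fun j => x j ≠ 0)).card := rfl

lemma zmod2_cases (a : ZMod 2) : a = 0 ∨ a = 1 := by revert a; decide

lemma hn_cast (x : Vtx D) : (hammingNorm x : ZMod 2) = ∑ j, x j := by
  rw [hn_filter, Finset.card_filter]
  push_cast
  refine Finset.sum_congr rfl fun j _ => ?_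
  rcases zmod2_cases (x j) with h | h <;> simp [h]

lemma even_iff_cast (n : ℕ) : Even n ↔ (n : ZMod 2) = 0 := by
  rw [ZMod.natCast_eq_zero_iff]; exact even_iff_two_dvd

lemma parity_sub (y u : Vtx D) (hy : Even (hammingNorm y))
    (hd : Even (hammingNorm (y - u))) : Even (hammingNorm u) := by
  rw [even_iff_cast] at *
  rw [hn_cast] at *
  have h : ∑ j, (y - u) j = (∑ j, y j) - ∑ j, u j := by
    simp [Pi.sub_apply, Finset.sum_sub_distrib]
  rw [h, hy] at hd
  linear_combination -hd

def esingle (j : Fin D) : Vtx D := fun k => if k = j then 1 else 0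

lemma supp_esingle (j : Fin D) :
    Finset.univ.filter (fun k => esingle j k ≠ 0) = {j} := by
  ext k; simp [esingle]

lemma hn_esingle (j : Fin D) : hammingNorm (esingle j) = 1 := by
  rw [hn_filter, supp_esingle, Finset.card_singleton]

lemma esingle_inj : Function.Injective (esingle (D := D)) := by
  intro a b h
  have := congrFun h a
  simp [esingle] at this
  by_contra hne
  exact hne this

lemma hn_eq_one (t : Vtx D) (h : hammingNorm t = 1) : ∃ j, t = esingle j := by
  rw [hn_filter] at h
  obtain ⟨j, hj⟩ := Finset.card_eq_one.mp h
  refine ⟨j, funext fun k => ?_⟩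
  have hk := fun k => Finset.ext_iff.mp hj k
  simp only [Finset.mem_filter, Finset.mem_univ, true_and, Finset.mem_singleton] at hk
  rcases zmod2_cases (t k) with h0 | h1
  · rw [h0, esingle, if_neg]
    intro hkj; subst hkj
    exact ((hk k).mpr rfl) h0
  · rw [h1, esingle, if_pos ((hk k).mp (by rw [h1]; exact one_ne_zero))]

lemma card_wone :
    (Finset.univ.filter (fun t : Vtx D => hammingNorm t = 1)).card = D := by
  rw [show Finset.univ.filter (fun t : Vtx D => hammingNorm t = 1)
      = Finset.univ.image esingle from ?_]
  · rw [Finset.card_image_of_injective _ esingle_inj, Finset.card_univ, Fintype.card_fin]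
  · ext t
    simp only [Finset.mem_filter, Finset.mem_univ, true_and, Finset.mem_image]
    constructor
    · intro h; obtain ⟨j, rfl⟩ := hn_eq_one t h; exact ⟨j, rfl⟩
    · rintro ⟨j, rfl⟩; exact hn_esingle j

lemma hn_sub_esingle (v : Vtx D) (j : Fin D) :
    hammingNorm (v - esingle j) =
      if v j ≠ 0 then hammingNorm v - 1 else hammingNorm v + 1 := by
  have happ : ∀ k, (v - esingle j) k = v k - (if k = j then 1 else 0) := fun k => rfl
  by_cases hj : v j ≠ 0
  · rw [if_pos hj, hn_filter, hn_filter,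
      show Finset.univ.filter (fun k => (v - esingle j) k ≠ 0)
        = (Finset.univ.filter (fun k => v k ≠ 0)).erase j from ?_]
    · rw [Finset.card_erase_of_mem (by simp [hj])]
    · ext k
      simp only [Finset.mem_filter, Finset.mem_univ, true_and, Finset.mem_erase, happ]
      by_cases hk : k = j
      · subst hk
        have h1 : v k = 1 := by
          rcases zmod2_cases (v k) with h | h
          · exact absurd h hj
          · exact h
        simp [h1]
      · simp [hk]
  · rw [if_neg hj, hn_filter, hn_filter,
      show Finset.univ.filter (fun k => (v - esingle j) k ≠ 0)
        = insert j (Finset.univ.filter (fun k => v k ≠ 0)) from ?_]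
    · rw [Finset.card_insert_of_notMem (by simp [not_not.mp hj])]
    · ext k
      simp only [Finset.mem_filter, Finset.mem_univ, true_and, Finset.mem_insert, happ]
      by_cases hk : k = j
      · subst hk
        simp [not_not.mp hj]
      · simp [hk]

lemma count_two (v : Vtx D) (hv : hammingNorm v = 2) :
    (Finset.univ.filter
      (fun t : Vtx D => hammingNorm t = 1 ∧ hammingNorm (v - t) = 1)).card = 2 := by
  rw [show Finset.univ.filter
        (fun t : Vtx D => hammingNorm t = 1 ∧ hammingNorm (v - t) = 1)
      = (Finset.univ.filter (fun j => v j ≠ 0)).image esingle from ?_]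
  · rw [Finset.card_image_of_injective _ esingle_inj, ← hn_filter, hv]
  · ext t
    simp only [Finset.mem_filter, Finset.mem_univ, true_and, Finset.mem_image]
    constructor
    · rintro ⟨h1, h2⟩
      obtain ⟨j, rfl⟩ := hn_eq_one t h1
      refine ⟨j, ?_, rfl⟩
      by_contra hj
      rw [hn_sub_esingle, if_neg (not_not_intro hj), hv] at h2
      omega
    · rintro ⟨j, hj, rfl⟩
      refine ⟨hn_esingle j, ?_⟩
      rw [hn_sub_esingle, if_pos hj, hv]

lemma count_other (v : Vtx D) (h0 : v ≠ 0) (h2 : hammingNorm v ≠ 2) :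
    (Finset.univ.filter
      (fun t : Vtx D => hammingNorm t = 1 ∧ hammingNorm (v - t) = 1)).card = 0 := by
  rw [Finset.card_eq_zero, Finset.filter_eq_empty_iff]
  rintro t - ⟨h1, hvt⟩
  have htri : hammingNorm v ≤ hammingNorm t + hammingNorm (v - t) := by
    calc hammingNorm v = hammingDist v 0 := by rw [hammingDist_zero_right]
    _ ≤ hammingDist v t + hammingDist t 0 := hammingDist_triangle v t 0
    _ = hammingNorm (v - t) + hammingNorm t := by
        rw [hammingDist_zero_right, hammingDist_comm, hammingDist_eq_hammingNorm, neg_add_eq_sub]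
    _ = hammingNorm t + hammingNorm (v - t) := by ring
  have heven : Even (hammingNorm v) := by
    rw [even_iff_cast, hn_cast]
    have h : ∑ j, v j = (∑ j, t j) + ∑ j, (v - t) j := by
      simp [Pi.sub_apply, Finset.sum_sub_distrib]
    rw [h, ← hn_cast, ← hn_cast, h1, hvt]
    decide
  have hne : hammingNorm v ≠ 0 := fun h => h0 (hammingNorm_eq_zero.mp h)
  rw [h1, hvt] at htri
  obtain ⟨k, hk⟩ := heven
  omega

lemma cube_sq :
    adjCube D * adjCube D = (D : ℂ) • (1 : Matrix (Vtx D) (Vtx D) ℂ) + (2 : ℂ) • adjTwo D := by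
  ext y z
  have lhs : (adjCube D * adjCube D) y z
      = ((Finset.univ.filter
          (fun t : Vtx D => hammingNorm t = 1 ∧ hammingNorm ((y - z) - t) = 1)).card : ℂ) := by
    rw [mul_apply]
    simp only [adjCube]
    rw [show (∑ u : Vtx D, (if hammingNorm (y - u) = 1 then (1:ℂ) else 0) *
            (if hammingNorm (u - z) = 1 then (1:ℂ) else 0))
        = ∑ t : Vtx D,
            (if hammingNorm t = 1 ∧ hammingNorm ((y - z) - t) = 1 then (1:ℂ) else 0) from ?_]
    · exact Finset.sum_boole _ _
    · refine Fintype.sum_equiv (Equiv.subLeft y) _ _ fun t => ?_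
      simp only [Equiv.subLeft_apply]
      simp only [show y - z - (y - t) = t - z from by abel]
      rw [ite_mul, one_mul, zero_mul, ← ite_and]
  rw [lhs]
  rw [Matrix.add_apply, Matrix.smul_apply, Matrix.smul_apply, Matrix.one_apply]
  by_cases hyz : y = z
  · subst hyz
    rw [sub_self]
    rw [show (Finset.univ.filter
          (fun t : Vtx D => hammingNorm t = 1 ∧ hammingNorm ((0:Vtx D) - t) = 1))
        = Finset.univ.filter (fun t : Vtx D => hammingNorm t = 1) from ?_]
    · rw [card_wone]
      simp [adjTwo]
    · refine Finset.filter_congr fun t _ => ?_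
      have h0t : (0 : Vtx D) - t = t := by
        funext k
        show 0 - t k = t k
        rw [zero_sub, CharTwo.neg_eq]
      rw [h0t]
      exact ⟨fun h => h.1, fun h => ⟨h, h⟩⟩
  · have hv0 : y - z ≠ 0 := sub_ne_zero.mpr hyz
    rw [if_neg hyz]
    by_cases h2 : hammingNorm (y - z) = 2
    · rw [count_two _ h2]
      simp [adjTwo, h2]
    · rw [count_other _ hv0 h2]
      simp [adjTwo, h2]

/-- sum over even-weight subtype of a function vanishing off it -/
lemma sum_even (f : Vtx D → ℂ) (h0 : ∀ u, ¬ Even (hammingNorm u) → f u = 0) :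
    ∑ u : HVtx D, f u.val = ∑ u : Vtx D, f u := by
  rw [← Finset.sum_subtype (Finset.univ.filter (fun u : Vtx D => Even (hammingNorm u)))
      (by simp) f]
  exact Finset.sum_subset (Finset.filter_subset _ _)
    (fun x _ hx => h0 x (by simpa using hx))

/-- zero lemma: eigen-decomposed family summing to zero is termwise zero -/
lemma eig_sum_zero {n : Type*} [Fintype n] [DecidableEq n] (A : Matrix n n ℂ) (θ : ℕ → ℂ)
    (s : Finset ℕ) : Set.InjOn θ s → ∀ W : ℕ → Matrix n n ℂ,
      (∀ j ∈ s, A * W j = θ j • W j) → (∑ j ∈ s, W j = 0) → ∀ j ∈ s, W j = 0 := by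
  induction s using Finset.induction_on with
  | empty => intro _ W _ _ j hj; simp at hj
  | @insert a s ha ih =>
    intro hinj W hW hsum0 j hj
    have hmem : ∀ k ∈ s, k ∈ insert a s := fun k hk => Finset.mem_insert_of_mem hk
    have key : ∑ k ∈ s, (θ k - θ a) • W k = 0 := by
      have h1 : ∑ k ∈ insert a s, (θ k • W k - θ a • W k) = 0 := by
        rw [Finset.sum_sub_distrib]
        have hA : ∑ k ∈ insert a s, θ k • W k = 0 := by
          calc ∑ k ∈ insert a s, θ k • W k = ∑ k ∈ insert a s, A * W k :=
                (Finset.sum_congr rfl fun k hk => (hW k hk).symm)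
          _ = A * ∑ k ∈ insert a s, W k := by rw [Finset.mul_sum]
          _ = 0 := by rw [hsum0, mul_zero]
        rw [hA, ← Finset.smul_sum, hsum0, smul_zero, sub_zero]
      rw [Finset.sum_insert ha, sub_self, zero_add] at h1
      calc ∑ k ∈ s, (θ k - θ a) • W k = ∑ k ∈ s, (θ k • W k - θ a • W k) := by
            refine Finset.sum_congr rfl fun k _ => ?_
            rw [sub_smul]
      _ = 0 := h1
    have hzero : ∀ k ∈ s, (θ k - θ a) • W k = 0 := by
      refine ih (hinj.mono (by intro x hx; exact hmem x hx)) _ ?_ key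
      intro k hk
      rw [Matrix.mul_smul, hW k (hmem k hk), smul_comm]
    have hWs : ∀ k ∈ s, W k = 0 := by
      intro k hk
      have hne : θ k - θ a ≠ 0 := by
        intro h
        have hka := hinj (hmem k hk) (Finset.mem_insert_self a s) (sub_eq_zero.mp h)
        exact ha (hka ▸ hk)
      rcases smul_eq_zero.mp (hzero k hk) with h | h
      · exact absurd h hne
      · exact h
    rcases Finset.mem_insert.mp hj with rfl | hjs
    · have := hsum0
      rw [Finset.sum_insert ha, Finset.sum_eq_zero hWs, add_zero] at this
      exact this
    · exact hWs j hjs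

end Stmt11Aux

open Stmt11Aux

theorem stmt11 (D : ℕ) (hD : 3 ≤ D) (hDodd : Odd D)
    (E' : ℕ → Matrix (Vtx D) (Vtx D) ℂ)
    (hsum' : ∑ i ∈ Finset.range (D + 1), E' i = 1)
    (heig' : ∀ i ≤ D, adjCube D * E' i = ((D : ℂ) - 2 * i) • E' i)
    (E : ℕ → Matrix (HVtx D) (HVtx D) ℂ)
    (hsum : ∑ i ∈ Finset.range ((D - 1) / 2 + 1), E i = 1)
    (heig : ∀ i ≤ (D - 1) / 2,
      adjHalf D * E i = (((((D : ℂ) - 2 * i)) ^ 2 - D) / 2) • E i) :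
    ∀ i ≤ (D - 1) / 2, ∀ y z : HVtx D,
      E i y z = (E' i + E' (D - i)) y.val z.val := by
  obtain ⟨m', hm'⟩ := hDodd
  set m := (D - 1) / 2 with hm
  have hmD : D = 2 * m + 1 := by omega
  -- eigenvalue function
  set θ : ℕ → ℂ := fun j => (((D : ℂ) - 2 * j) ^ 2 - (D : ℂ)) / 2 with hθ
  -- adjTwo eigenvectors
  have hBeig : ∀ i ≤ D, adjTwo D * E' i = θ i • E' i := by
    intro i hi
    have h1 := heig' i hi
    have h2 : (adjCube D * adjCube D) * E' i = ((D : ℂ) - 2 * i) ^ 2 • E' i := by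
      rw [Matrix.mul_assoc, h1, Matrix.mul_smul, h1, smul_smul, sq]
    rw [cube_sq, Matrix.add_mul, Matrix.smul_mul, Matrix.one_mul, Matrix.smul_mul] at h2
    have h3 : (2 : ℂ) • (adjTwo D * E' i)
        = (((D : ℂ) - 2 * i) ^ 2 - (D : ℂ)) • E' i := by
      rw [sub_smul, ← h2]; abel
    have h4 := congrArg (fun M => ((2 : ℂ)⁻¹) • M) h3
    simp only [smul_smul] at h4
    rw [inv_mul_cancel₀ (two_ne_zero), one_smul] at h4
    rw [h4, hθ]
    congr 1
    field_simp
  -- the candidate family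
  set F : ℕ → Matrix (HVtx D) (HVtx D) ℂ :=
    fun i => fun y z => (E' i + E' (D - i)) y.val z.val with hF
  -- F eigen property
  have hFeig : ∀ i ≤ m, adjHalf D * F i = θ i • F i := by
    intro i hi
    have hiD : i ≤ D := by omega
    have hDiD : D - i ≤ D := Nat.sub_le _ _
    have hBi := hBeig i hiD
    have hθeq : θ (D - i) = θ i := by
      simp only [hθ]
      rw [Nat.cast_sub hiD]
      ring
    have hBDi : adjTwo D * E' (D - i) = θ i • E' (D - i) := by
      rw [hBeig (D - i) hDiD, hθeq]
    have hBG : adjTwo D * (E' i + E' (D - i)) = θ i • (E' i + E' (D - i)) := by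
      rw [Matrix.mul_add, hBi, hBDi, smul_add]
    ext y z
    have step : (adjHalf D * F i) y z
        = (adjTwo D * (E' i + E' (D - i))) y.val z.val := by
      rw [Matrix.mul_apply, Matrix.mul_apply]
      exact sum_even (D := D)
        (fun u => (if hammingNorm (y.val - u) = 2 then (1:ℂ) else 0)
            * (E' i + E' (D - i)) u z.val)
        (fun u hu => by
          show (if hammingNorm (y.val - u) = 2 then (1:ℂ) else 0)
              * (E' i + E' (D - i)) u z.val = 0
          rw [if_neg, zero_mul]
          intro h2
          exact hu (parity_sub y.val u y.prop (by rw [h2]; exact even_two)))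
    rw [step, hBG, Matrix.smul_apply, Matrix.smul_apply]
  -- F sum property
  have hFsum : ∑ i ∈ Finset.range (m + 1), F i = 1 := by
    have hre : ∑ i ∈ Finset.range (m + 1), E' (D - i)
        = ∑ j ∈ Finset.Ico (m + 1) (D + 1), E' j := by
      refine Finset.sum_bij' (fun i _ => D - i) (fun j _ => D - j) ?_ ?_ ?_ ?_ ?_
      · intro i hi
        simp only [Finset.mem_range] at hi
        simp only [Finset.mem_Ico]
        omega
      · intro j hj
        simp only [Finset.mem_Ico] at hj
        simp only [Finset.mem_range]
        omega
      · intro i hi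
        show D - (D - i) = i
        simp only [Finset.mem_range] at hi
        omega
      · intro j hj
        show D - (D - j) = j
        simp only [Finset.mem_Ico] at hj
        omega
      · intro i _
        rfl
    have hsplit : ∑ i ∈ Finset.range (m + 1), (E' i + E' (D - i))
        = ∑ i ∈ Finset.range (D + 1), E' i := by
      rw [Finset.sum_add_distrib, hre, Finset.range_eq_Ico,
        Finset.sum_Ico_consecutive _ (by omega) (by omega), ← Finset.range_eq_Ico]
    ext y z
    calc (∑ i ∈ Finset.range (m + 1), F i) y z
        = ∑ i ∈ Finset.range (m + 1), F i y z := Matrix.sum_apply y z _ _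
      _ = ∑ i ∈ Finset.range (m + 1), (E' i + E' (D - i)) y.val z.val := rfl
      _ = (∑ i ∈ Finset.range (m + 1), (E' i + E' (D - i))) y.val z.val :=
          (Matrix.sum_apply y.val z.val _ _).symm
      _ = (1 : Matrix (Vtx D) (Vtx D) ℂ) y.val z.val := by rw [hsplit, hsum']
      _ = (1 : Matrix (HVtx D) (HVtx D) ℂ) y z := by
          rw [Matrix.one_apply, Matrix.one_apply]
          simp [Subtype.ext_iff]
  -- injectivity of eigenvalues
  have hθinj : Set.InjOn θ (Finset.range (m + 1) : Set ℕ) := by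
    intro a ha b hb hab
    simp only [Finset.coe_range, Set.mem_Iio] at ha hb
    simp only [hθ] at hab
    have h2 : ((D : ℂ) - 2 * a) ^ 2 = ((D : ℂ) - 2 * b) ^ 2 := by
      field_simp at hab
      linear_combination hab
    have hfac : (((D : ℂ) - 2 * a) - ((D : ℂ) - 2 * b))
        * (((D : ℂ) - 2 * a) + ((D : ℂ) - 2 * b)) = 0 := by linear_combination h2
    rcases mul_eq_zero.mp hfac with h | h
    · have hab' : (a : ℂ) = b := by linear_combination h / (-2)
      exact_mod_cast hab'
    · have hD' : (D : ℂ) = a + b := by linear_combination h / 2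
      have hDn : D = a + b := by exact_mod_cast hD'
      omega
  -- conclude via the zero lemma
  intro i hi y z
  have hzero := eig_sum_zero (adjHalf D) θ (Finset.range (m + 1)) hθinj
    (fun j => E j - F j) ?_ ?_ i (Finset.mem_range.mpr (by omega))
  · have hEF : E i = F i := sub_eq_zero.mp hzero
    rw [hEF]
  · intro j hj
    rw [Finset.mem_range] at hj
    have hjm : j ≤ m := by omega
    show adjHalf D * (E j - F j) = θ j • (E j - F j)
    rw [Matrix.mul_sub, hFeig j hjm, smul_sub]
    congr 1
    have h := heig j hjm
    simp only [hθ]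
    exact h
  · show ∑ j ∈ Finset.range (m + 1), (E j - F j) = 0
    rw [Finset.sum_sub_distrib, hsum, hFsum, sub_self]
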